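/- Let w be an m-linear form on V that is Q-invariant for some Q ∈ GL(V), i.e. w(X₁,...,X_m) = w(Q X₁,...,Q X_m) for all X_i. Define π_Q(w)(X₁,...,X_m) = Σ_{k=1}^{m} w(Q X_k, Q X_{k+1}, ..., Q X_m, X₁, ..., X_{k-1}). Then π_Q(w) is twisted cyclic with twisting element Q: π_Q(w)(X₁,...,X_{m-1},X_m) = π_Q(w)(Q X_m, X₁, ..., X_{m-1}) for all X_i. -/

import Mathlib

/-- The twisted cyclic shift: `(X₁, …, X_M) ↦ (Q X_M, X₁, …, X_{M-1})`. -/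
def cycOp {K V : Type*} [Field K] [AddCommGroup V] [Module K V] {m : ℕ}
    (Q : V ≃ₗ[K] V) (X : Fin (m + 1) → V) : Fin (m + 1) → V :=
  Fin.cons (Q (X (Fin.last m))) (Fin.init X)

/-- `π_Q(w)(X₁,…,X_M) = Σ_{k=1}^{M} w(Q X_k, …, Q X_M, X₁, …, X_{k-1})`,
expressed via iterates of the twisted cyclic shift. -/
def piQ {K V : Type*} [Field K] [AddCommGroup V] [Module K V] {m : ℕ}
    (Q : V ≃ₗ[K] V) (f : (Fin (m + 1) → V) → K) : (Fin (m + 1) → V) → K :=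
  fun X => ∑ k ∈ Finset.range (m + 1), f ((cycOp Q)^[k + 1] X)

lemma finNegOne {m : ℕ} : (-1 : Fin (m + 1)) = Fin.last m := by
  ext; rw [Fin.coe_neg_one]; rfl

lemma finValSubOne {m : ℕ} (i : Fin (m + 1)) (hi : (i : ℕ) ≠ 0) :
    ((i - 1 : Fin (m + 1)) : ℕ) = (i : ℕ) - 1 := by
  have him := i.is_lt
  have h1 : (1 : Fin (m + 1)).val = 1 % (m + 1) := rfl
  simp only [Fin.sub_def, h1, Nat.mod_eq_of_lt (show 1 < m + 1 by omega)]
  have h2 : m + 1 - 1 + i.val = (i.val - 1) + (m + 1) := by omega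
  rw [h2, Nat.add_mod_right, Nat.mod_eq_of_lt (by omega)]

lemma cycOp_apply {K V : Type*} [Field K] [AddCommGroup V] [Module K V] {m : ℕ}
    (Q : V ≃ₗ[K] V) (Y : Fin (m + 1) → V) (i : Fin (m + 1)) :
    cycOp Q Y i = if (i : ℕ) = 0 then Q (Y (i - 1)) else Y (i - 1) := by
  induction i using Fin.cases with
  | zero =>
    have h : (0 - 1 : Fin (m + 1)) = Fin.last m := by rw [zero_sub, finNegOne]
    simp [cycOp, h]
  | succ j =>
    have hj := j.is_lt
    have h : (j.succ - 1 : Fin (m + 1)) = j.castSucc := by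
      ext
      rw [finValSubOne _ (by simp)]
      simp
    simp only [cycOp, Fin.cons_succ, Fin.init, Fin.val_succ, h]
    rw [if_neg (by omega)]

open Fin.NatCast Fin.CommRing in
lemma cycOp_iterate {K V : Type*} [Field K] [AddCommGroup V] [Module K V] {m : ℕ}
    (Q : V ≃ₗ[K] V) :
    ∀ k ≤ m, ∀ (Y : Fin (m + 1) → V) (i : Fin (m + 1)),
      (cycOp Q)^[k + 1] Y i =
        if (i : ℕ) ≤ k then Q (Y (i - ((k + 1 : ℕ) : Fin (m + 1))))
        else Y (i - ((k + 1 : ℕ) : Fin (m + 1))) := by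
  intro k
  induction k with
  | zero =>
    intro _ Y i
    simpa [Nat.le_zero] using cycOp_apply Q Y i
  | succ k ih =>
    intro hk Y i
    have hk' : k ≤ m := by omega
    have hkv : (((k + 1 : ℕ) : Fin (m + 1)) : ℕ) = k + 1 := by
      rw [Fin.val_natCast, Nat.mod_eq_of_lt (by omega)]
    have hsub : ∀ j : Fin (m + 1), j - 1 - ((k + 1 : ℕ) : Fin (m + 1))
        = j - ((k + 1 + 1 : ℕ) : Fin (m + 1)) := by
      intro j
      have : ((k + 1 + 1 : ℕ) : Fin (m + 1)) = ((k + 1 : ℕ) : Fin (m + 1)) + 1 := by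
        push_cast; ring
      rw [this]; ring
    rw [Function.iterate_succ_apply', cycOp_apply, ih hk']
    by_cases hi0 : (i : ℕ) = 0
    · rw [if_pos hi0]
      have hlast : (i - 1 : Fin (m + 1)) = Fin.last m := by
        have : i = 0 := Fin.ext hi0
        rw [this, zero_sub, finNegOne]
      rw [hlast]
      rw [if_neg (by simp [Fin.last]; omega), if_pos (by omega)]
      rw [← hsub, hlast]
    · rw [if_neg hi0, hsub]
      have hv : ((i - 1 : Fin (m + 1)) : ℕ) = (i : ℕ) - 1 := finValSubOne i hi0
      by_cases hik : (i : ℕ) ≤ k + 1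
      · rw [if_pos (by omega), if_pos hik]
      · rw [if_neg (by omega), if_neg hik]

open Fin.NatCast in
lemma cycOp_iterate_full {K V : Type*} [Field K] [AddCommGroup V] [Module K V] {m : ℕ}
    (Q : V ≃ₗ[K] V) (Y : Fin (m + 1) → V) :
    (cycOp Q)^[m + 1] Y = fun i => Q (Y i) := by
  funext i
  rw [cycOp_iterate Q m le_rfl Y i, if_pos (by omega)]
  congr 2
  have : ((m + 1 : ℕ) : Fin (m + 1)) = 0 := by
    ext; rw [Fin.val_natCast]; simp
  rw [this, sub_zero]

lemma cycOp_comp_Q {K V : Type*} [Field K] [AddCommGroup V] [Module K V] {m : ℕ}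
    (Q : V ≃ₗ[K] V) (Y : Fin (m + 1) → V) :
    cycOp Q (fun i => Q (Y i)) = fun i => Q (cycOp Q Y i) := by
  funext i
  induction i using Fin.cases with
  | zero => simp [cycOp]
  | succ j => simp [cycOp, Fin.init]

/-- If `w` is a `Q`-invariant multilinear form then `π_Q(w)` is
twisted cyclic with twisting element `Q`. -/
theorem stmt_3 {K V : Type*} [Field K] [AddCommGroup V] [Module K V]
    {m : ℕ} (hm : 1 ≤ m)
    (w : MultilinearMap K (fun _ : Fin (m + 1) => V) K)
    (Q : V ≃ₗ[K] V)
    (hinv : ∀ X : Fin (m + 1) → V, w X = w (fun i => Q (X i))) :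
    ∀ X : Fin (m + 1) → V, piQ Q ⇑w X = piQ Q ⇑w (cycOp Q X) := by
  intro X
  unfold piQ
  have hiter : ∀ k : ℕ, (cycOp Q)^[k + 1] (cycOp Q X) = (cycOp Q)^[k + 2] X := by
    intro k
    exact (Function.iterate_succ_apply (cycOp Q) (k + 1) X).symm
  simp_rw [hiter]
  rw [Finset.sum_range_succ', Finset.sum_range_succ]
  have key : w ((cycOp Q)^[m + 2] X) = w (cycOp Q X) := by
    have h1 : (cycOp Q)^[m + 2] X = cycOp Q (fun i => Q (X i)) := by
      rw [show m + 2 = (m + 1) + 1 from rfl, Function.iterate_succ_apply',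
        cycOp_iterate_full]
    rw [h1, cycOp_comp_Q, ← hinv]
  rw [key]
  norm_num
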